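/- Let A_R ∈ ℝ^{n×n} with A_R = diag(I_{n−m}, 0_m) and let P ∈ ℝ^{n×n} be symmetric positive definite. If the last m rows of P have the form [β C, 0, P_R] for some vector β ∈ ℝ^m, i.e. [0 0 I_m] P = [β C, 0_{(n−m−p)}, P_R] with P_R ∈ ℝ^{m×m} symmetric positive definite, then for every x ∈ ℝⁿ with C x = 0 (where C ∈ ℝ^{p×n} acts on the first p coordinates), x ᵀ (A_Rᵀ P A_R − P) x ≤ 0. -/

import Mathlib

open Matrix

/-- Key algebraic step of the `H_β`-condition: if the last `m` rows of a symmetric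
positive definite `P` have the structure `[βC, 0, P_R]` (the outer product `β Cᵀ` on the
first block, supported on the first `p` coordinates, and a positive definite `P_R` on
the last block), then the jump map `x ↦ A_R x` with `A_R = diag(I, 0)` does not increase
the quadratic form on the reset surface `{x : Cx = 0}`. -/
theorem hbeta_structural_jump_condition
    (k m p : ℕ)
    (P : Matrix (Fin k ⊕ Fin m) (Fin k ⊕ Fin m) ℝ)
    (hPsymm : P.IsSymm) (hPpos : P.PosDef)
    (AR : Matrix (Fin k ⊕ Fin m) (Fin k ⊕ Fin m) ℝ)
    (hAR : AR = Matrix.fromBlocks 1 0 0 0)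
    (c : Fin k → ℝ) (hc : ∀ i : Fin k, p ≤ (i : ℕ) → c i = 0)
    (β : Fin m → ℝ)
    (PR : Matrix (Fin m) (Fin m) ℝ) (hPRsymm : PR.IsSymm) (hPRpos : PR.PosDef)
    (hstruct₁ : ∀ (j : Fin m) (i : Fin k), P (Sum.inr j) (Sum.inl i) = β j * c i)
    (hstruct₂ : ∀ j j' : Fin m, P (Sum.inr j) (Sum.inr j') = PR j j')
    (x : Fin k ⊕ Fin m → ℝ)
    (hx : ∑ i, c i * x (Sum.inl i) = 0) :
    x ⬝ᵥ ((AR.transpose * P * AR - P).mulVec x) ≤ 0 := by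
  subst hAR
  have hsym : ∀ (i : Fin k) (j : Fin m), P (Sum.inl i) (Sum.inr j) = β j * c i := by
    intro i j
    rw [← hstruct₁ j i, ← hPsymm.apply]
  have key : x ⬝ᵥ ((Matrix.fromBlocks (1:Matrix (Fin k) (Fin k) ℝ) 0 0 0).transpose * P *
      (Matrix.fromBlocks 1 0 0 0) - P).mulVec x
      = -((fun j => x (Sum.inr j)) ⬝ᵥ PR.mulVec (fun j => x (Sum.inr j)))
        - 2 * ((∑ j, x (Sum.inr j) * β j) * (∑ i, c i * x (Sum.inl i))) := by
    simp only [dotProduct, mulVec, Matrix.sub_apply, Matrix.mul_apply,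
      Fintype.sum_sum_type, Matrix.fromBlocks_apply₁₁, Matrix.fromBlocks_apply₁₂,
      Matrix.fromBlocks_apply₂₁, Matrix.fromBlocks_apply₂₂, Matrix.transpose_apply,
      Matrix.one_apply, Matrix.zero_apply, mul_ite, mul_one, mul_zero, ite_mul, zero_mul,
      Finset.sum_ite_eq, Finset.sum_ite_eq', Finset.mem_univ, if_true, add_zero, zero_add,
      Finset.mul_sum, Finset.sum_mul, hstruct₁, hstruct₂, hsym]
    simp only [Finset.sum_const_zero, zero_mul, zero_add, zero_sub, sub_zero, add_zero,
      neg_mul, mul_neg, Finset.sum_neg_distrib, Finset.mul_sum, Finset.sum_mul]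
    simp only [one_mul, sub_self, zero_mul, Finset.sum_const_zero, zero_add, mul_neg,
      Finset.mul_sum, Finset.sum_neg_distrib, neg_add, Finset.sum_add_distrib]
    simp only [mul_add, mul_neg, Finset.mul_sum, Finset.sum_add_distrib,
      Finset.sum_neg_distrib]
    rw [Finset.sum_comm (s := Finset.univ) (t := Finset.univ)
      (f := fun (j : Fin m) (i : Fin k) => x (Sum.inr j) * (β j * c i * x (Sum.inl i)))]
    ring_nf
    have e : ∑ x_1 : Fin k, ∑ x_2 : Fin m, x (Sum.inl x_1) * β x_2 * c x_1 * x (Sum.inr x_2)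
        = ∑ x_1 : Fin k, ∑ x_2 : Fin m, x (Sum.inr x_2) * β x_2 * c x_1 * x (Sum.inl x_1) :=
      Finset.sum_congr rfl fun i _ => Finset.sum_congr rfl fun j _ => by ring
    have e2 : ∑ x_1 : Fin k, ∑ x_2 : Fin m, 2 * x (Sum.inr x_2) * β x_2 * c x_1 * x (Sum.inl x_1)
        = (∑ x_1 : Fin k, ∑ x_2 : Fin m, x (Sum.inr x_2) * β x_2 * c x_1 * x (Sum.inl x_1)) * 2 := by
      rw [Finset.sum_mul]
      refine Finset.sum_congr rfl fun i _ => ?_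
      rw [Finset.sum_mul]
      exact Finset.sum_congr rfl fun j _ => by ring
    have e3 : ∑ x_1 : Fin k, ∑ x_2 : Fin m, x (Sum.inr x_2) * β x_2 * c x_1 * x (Sum.inl x_1) * 2
        = (∑ x_1 : Fin k, ∑ x_2 : Fin m, x (Sum.inr x_2) * β x_2 * c x_1 * x (Sum.inl x_1)) * 2 := by
      simp only [Finset.sum_mul]
    rw [e, e3]
    ring
  rw [key, hx]
  simp only [mul_zero, sub_zero, neg_nonpos]
  simpa using hPRpos.posSemidef.dotProduct_mulVec_nonneg (fun j => x (Sum.inr j))
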